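/- Fix positive integer weights (w₁,w₂) on the polynomial ring ℂ[z₁,z₂], let μ > 0, and let f₁, f₂ be weighted homogeneous polynomials with f_i of weighted degree w_i + μ, not both identically zero (so Y = f₁·∂/∂z₁ + f₂·∂/∂z₂ is a nonzero homogeneous holomorphic vector field of positive weighted degree). Then for every ν, the ℂ-vector space { P ∈ ℂ[z₁,z₂] : P is weighted homogeneous of weighted degree ν and f₁·∂P/∂z₁ + f₂·∂P/∂z₂ = 0 } has dimension at most one. -/

import Mathlib

open MvPolynomial

noncomputable section

namespace KernelAux

open AddMonoidAlgebra

lemma coeff_pderiv (i : Fin 2) (m : Fin 2 →₀ ℕ) (P : MvPolynomial (Fin 2) ℂ) :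
    coeff m (pderiv i P) = ((m i : ℂ) + 1) * MvPolynomial.coeff (m + Finsupp.single i 1) P := by
  induction P using MvPolynomial.induction_on' with
  | add p q hp hq => simp [hp, hq, mul_add]
  | monomial s a =>
    classical
    rw [pderiv_monomial, coeff_monomial, coeff_monomial]
    by_cases hs : s = m + Finsupp.single i 1
    · have h1 : s - Finsupp.single i 1 = m := by
        rw [hs, add_tsub_cancel_right]
      have h2 : s i = m i + 1 := by
        rw [hs]; simp
      rw [if_pos h1, if_pos hs, h2]
      push_cast; ring
    · rw [if_neg hs]
      by_cases h1 : s - Finsupp.single i 1 = m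
      · rw [if_pos h1]
        have h0 : s i = 0 := by
          by_contra h0
          apply hs
          rw [← h1, tsub_add_cancel_of_le (Finsupp.single_le_iff.mpr (Nat.one_le_iff_ne_zero.mpr h0))]
        rw [h0]; simp
      · rw [if_neg h1, mul_zero]

lemma eq_C_of_pderiv_eq_zero {P : MvPolynomial (Fin 2) ℂ}
    (h : ∀ i, pderiv i P = 0) : P = C (coeff 0 P) := by
  ext m
  by_cases hm : m = 0
  · subst hm; simp
  · have hne : ∃ i, m i ≠ 0 := by
      by_contra h'
      push_neg at h'
      exact hm (Finsupp.ext h')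
    obtain ⟨i, hi⟩ := hne
    have h2 := coeff_pderiv i (m - Finsupp.single i 1) P
    rw [h i, tsub_add_cancel_of_le (Finsupp.single_le_iff.mpr (Nat.one_le_iff_ne_zero.mpr hi))] at h2
    rw [MvPolynomial.coeff_zero] at h2
    have hc : coeff m P = 0 :=
      (mul_eq_zero.mp h2.symm).resolve_left (Nat.cast_add_one_ne_zero _)
    rw [hc, coeff_C, if_neg (fun h => hm h.symm)]

/-- Lex degree of a 2-variable polynomial. -/
def deg (p : MvPolynomial (Fin 2) ℂ) : Lex (Fin 2 →₀ ℕ) :=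
  p.support.sup toLex

lemma toLex_strictMono : StrictMono (@toLex (Fin 2 →₀ ℕ)) :=
  Finsupp.toLex_monotone.strictMono_of_injective toLex.injective

lemma deg_mul {p q : MvPolynomial (Fin 2) ℂ} (hp : p ≠ 0) (hq : q ≠ 0) :
    deg (p * q) = deg p + deg q := by
  apply AddMonoidAlgebra.supDegree_mul toLex.injective (fun _ _ => rfl) _ hp hq
  rw [Ne, mul_eq_zero]
  push_neg
  exact ⟨fun hlc => hp ((AddMonoidAlgebra.leadingCoeff_eq_zero toLex.injective).mp hlc),
    fun hlc => hq ((AddMonoidAlgebra.leadingCoeff_eq_zero toLex.injective).mp hlc)⟩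

lemma le_deg {p : MvPolynomial (Fin 2) ℂ} {m : Fin 2 →₀ ℕ} (h : coeff m p ≠ 0) :
    toLex m ≤ deg p :=
  Finset.le_sup (mem_support_iff.mpr h)

lemma deg_pderiv_lt {p : MvPolynomial (Fin 2) ℂ} {i : Fin 2} (h : pderiv i p ≠ 0) :
    deg (pderiv i p) < deg p := by
  obtain ⟨m₀, hm₀⟩ := ne_zero_iff.mp h
  have key : ∀ m : Fin 2 →₀ ℕ, coeff m (pderiv i p) ≠ 0 → toLex m < deg p := by
    intro m hm
    have hc : MvPolynomial.coeff (m + Finsupp.single i 1) p ≠ 0 := by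
      intro h0
      rw [coeff_pderiv, h0, mul_zero] at hm
      exact hm rfl
    refine lt_of_lt_of_le ?_ (le_deg hc)
    exact toLex_strictMono (lt_add_of_pos_right m
      (pos_iff_ne_zero.mpr (by
        intro h0
        have := DFunLike.congr_fun h0 i
        simp at this)))
  rw [deg, Finset.sup_lt_iff (lt_of_le_of_lt bot_le (key m₀ hm₀))]
  intro m hm
  exact key m (mem_support_iff.mp hm)

lemma not_dvd_pderiv {r : MvPolynomial (Fin 2) ℂ} (hr0 : r ≠ 0) {i : Fin 2}
    (h : pderiv i r ≠ 0) : ¬ r ∣ pderiv i r := by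
  rintro ⟨s, hs⟩
  have hs0 : s ≠ 0 := by
    rintro rfl
    rw [mul_zero] at hs
    exact h hs
  have h1 : deg r ≤ deg (pderiv i r) := by
    rw [hs, deg_mul hr0 hs0]
    exact le_add_of_nonneg_right bot_le
  exact absurd h1 (not_le_of_gt (deg_pderiv_lt h))

lemma deg_one : deg (1 : MvPolynomial (Fin 2) ℂ) = 0 := by
  refine le_antisymm (Finset.sup_le fun m hm => ?_) bot_le
  have := mem_support_iff.mp hm
  rw [coeff_one] at this
  have hm0 : m = 0 := by
    by_contra h0
    rw [if_neg (fun h => h0 h.symm)] at this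
    exact this rfl
  subst hm0
  exact le_refl _

lemma isUnit_constant {u : MvPolynomial (Fin 2) ℂ} (hu : IsUnit u) :
    ∃ c : ℂ, c ≠ 0 ∧ u = C c := by
  obtain ⟨v, hv⟩ := hu.exists_right_inv
  have hu0 : u ≠ 0 := left_ne_zero_of_mul_eq_one hv
  have hv0 : v ≠ 0 := right_ne_zero_of_mul_eq_one hv
  have hdeg : deg u + deg v = 0 := by
    rw [← deg_mul hu0 hv0, hv, deg_one]
  have hdu : deg u = 0 :=
    le_antisymm (hdeg ▸ le_add_of_nonneg_right (bot_le : (0:Lex (Fin 2 →₀ ℕ)) ≤ deg v))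
      (bot_le : (0:Lex (Fin 2 →₀ ℕ)) ≤ deg u)
  have hsupp : ∀ m ∈ u.support, m = 0 := by
    intro m hm
    have h1 : toLex m ≤ deg u := Finset.le_sup hm
    rw [hdu] at h1
    exact toLex.injective (le_antisymm h1 (bot_le : (0:Lex (Fin 2 →₀ ℕ)) ≤ toLex m))
  have huC : u = C (coeff 0 u) := by
    ext m
    rw [coeff_C]
    by_cases hm0 : m = 0
    · subst hm0; simp
    · rw [if_neg (fun h => hm0 h.symm)]
      exact notMem_support_iff.mp (fun hm => hm0 (hsupp m hm))
  refine ⟨MvPolynomial.coeff 0 u, fun h0 => hu0 (by rw [huC, h0, map_zero]), huC⟩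

lemma euler {w : Fin 2 → ℕ} {ν : ℕ} {P : MvPolynomial (Fin 2) ℂ}
    (h : P.IsWeightedHomogeneous w ν) :
    C (w 0 : ℂ) * X 0 * pderiv 0 P + C (w 1 : ℂ) * X 1 * pderiv 1 P = C (ν : ℂ) * P := by
  have key : ∀ (i : Fin 2) (s : Fin 2 →₀ ℕ) (a : ℂ),
      C (w i : ℂ) * X i * pderiv i (monomial s a) = monomial s (((w i * s i : ℕ) : ℂ) * a) := by
    intro i s a
    rw [pderiv_monomial]
    rcases Nat.eq_zero_or_pos (s i) with h0 | hpos
    · simp [h0]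
    · have hX : X (R := ℂ) i * monomial (s - Finsupp.single i 1) (a * (s i : ℂ))
          = monomial s (a * (s i : ℂ)) := by
        rw [X, monomial_mul, one_mul, add_comm,
          tsub_add_cancel_of_le (Finsupp.single_le_iff.mpr hpos)]
      rw [mul_assoc, hX, C_mul_monomial]
      congr 1
      push_cast
      ring
  conv_lhs => rw [as_sum P]
  conv_rhs => rw [as_sum P]
  rw [map_sum (pderiv 0), map_sum (pderiv 1)]
  simp only [Finset.mul_sum]
  rw [← Finset.sum_add_distrib]
  refine Finset.sum_congr rfl fun s hs => ?_
  rw [key 0, key 1, C_mul_monomial, ← map_add]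
  congr 1
  have hws : w 0 * s 0 + w 1 * s 1 = ν := by
    have h2 := h (mem_support_iff.mp hs)
    rw [Finsupp.weight_apply, Finsupp.sum_fintype] at h2
    · rw [Fin.sum_univ_two] at h2
      simpa [mul_comm] using h2
    · intro i; simp
  push_cast [← hws]
  ring

lemma homog_zero_constant {w : Fin 2 → ℕ} (hw : ∀ i, 0 < w i) {P : MvPolynomial (Fin 2) ℂ}
    (h : P.IsWeightedHomogeneous w 0) : P = C (coeff 0 P) := by
  ext m
  rw [coeff_C]
  by_cases hm : m = 0
  · subst hm; simp
  · rw [if_neg (fun h' => hm h'.symm)]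
    by_contra hc
    have h2 := h hc
    rw [Finsupp.weight_apply, Finsupp.sum_fintype] at h2
    · rw [Fin.sum_univ_two, smul_eq_mul, smul_eq_mul] at h2
      have h00 : m 0 * w 0 = 0 := by omega
      have h11 : m 1 * w 1 = 0 := by omega
      have e0 : m 0 = 0 := (Nat.mul_eq_zero.mp h00).resolve_right (hw 0).ne'
      have e1 : m 1 = 0 := (Nat.mul_eq_zero.mp h11).resolve_right (hw 1).ne'
      apply hm
      ext i
      fin_cases i
      · simpa using e0
      · simpa using e1
    · intro i; simp

lemma dependence (Q : MvPolynomial (Fin 2) ℂ) :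
    ∀ P : MvPolynomial (Fin 2) ℂ, Q ≠ 0 →
      (∀ i, P * pderiv i Q = Q * pderiv i P) → ∃ c : ℂ, P = C c * Q := by
  induction Q using UniqueFactorizationMonoid.induction_on_prime with
  | h₁ => exact fun P h _ => absurd rfl h
  | h₂ u hu =>
    intro P _ hrel
    obtain ⟨c, hc, rfl⟩ := isUnit_constant hu
    have hP : ∀ i, pderiv i P = 0 := by
      intro i
      have h1 := hrel i
      rw [pderiv_C, mul_zero] at h1
      exact (mul_eq_zero.mp h1.symm).resolve_left (fun h => hc (by simpa using h))
    refine ⟨coeff 0 P / c, ?_⟩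
    rw [eq_C_of_pderiv_eq_zero hP, ← map_mul, div_mul_cancel₀ _ hc]
    simp
  | h₃ a r ha hr ih =>
    intro P hQ hrel
    have hr0 : r ≠ 0 := hr.ne_zero
    -- choose a variable where pderiv r ≠ 0
    have hex : ∃ i, pderiv i r ≠ 0 := by
      by_contra h'
      push_neg at h'
      have := eq_C_of_pderiv_eq_zero h'
      apply hr.not_unit
      rw [this]
      refine (Ne.isUnit (?_ : coeff 0 r ≠ 0)).map C
      intro h0
      rw [h0, map_zero] at this
      exact hr0 this
    obtain ⟨i₀, hi₀⟩ := hex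
    have hndvd : ¬ r ∣ pderiv i₀ r := not_dvd_pderiv hr0 hi₀
    have hrP : r ∣ P := by
      by_contra hnP
      have hall : ∀ k : ℕ, r ^ (k + 1) ∣ r * a := by
        intro k
        induction k with
        | zero => simpa using dvd_mul_right r a
        | succ k ihk =>
          obtain ⟨S, hS⟩ := ihk
          have h1 := hrel i₀
          rw [hS] at h1
          rw [pderiv_mul, pderiv_pow] at h1
          -- h1 : P * ((k+1) * r^k * ∂r * S + r^(k+1) * ∂S) = r^(k+1) * S * ∂P
          have h2 : r ^ k * (((k : MvPolynomial (Fin 2) ℂ) + 1) * P * pderiv i₀ r * S)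
              = r ^ k * (r * (S * pderiv i₀ P - P * pderiv i₀ S)) := by
            push_cast at h1
            linear_combination h1
          have h3 := mul_left_cancel₀ (pow_ne_zero k hr0) h2
          have hdvd : r ∣ ((k : MvPolynomial (Fin 2) ℂ) + 1) * P * pderiv i₀ r * S := ⟨_, h3⟩
          have hku : IsUnit ((k : MvPolynomial (Fin 2) ℂ) + 1) := by
            have hC : ((k : MvPolynomial (Fin 2) ℂ) + 1) = C ((k : ℂ) + 1) := by
              rw [map_add, map_one, map_natCast]
            rw [hC]
            exact (Ne.isUnit (Nat.cast_add_one_ne_zero k)).map C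
          have hdS : r ∣ S := by
            rcases hr.dvd_mul.mp hdvd with h | h
            · rcases hr.dvd_mul.mp h with h' | h'
              · rcases hr.dvd_mul.mp h' with h'' | h''
                · exact absurd (isUnit_of_dvd_unit h'' hku) hr.not_unit
                · exact absurd h'' hnP
              · exact absurd h' hndvd
            · exact h
          obtain ⟨S', hS'⟩ := hdS
          exact ⟨S', by rw [hS, hS']; ring⟩
      obtain ⟨n, hn⟩ := FiniteMultiplicity.of_prime_left hr (mul_ne_zero hr0 ha)
      exact hn (hall n)
    obtain ⟨P', rfl⟩ := hrP
    have hrel' : ∀ i, P' * pderiv i a = a * pderiv i P' := by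
      intro i
      have h1 := hrel i
      rw [pderiv_mul, pderiv_mul] at h1
      apply mul_left_cancel₀ (mul_ne_zero hr0 hr0)
      linear_combination h1
    obtain ⟨c, hc⟩ := ih P' ha hrel'
    exact ⟨c, by rw [hc]; ring⟩

end KernelAux

/-- for a nonzero homogeneous holomorphic vector field
`Y = f₁ ∂/∂z₁ + f₂ ∂/∂z₂` of positive weighted degree `μ` (so `f_i` is weighted homogeneous
of weighted degree `w_i + μ`), the space of weighted homogeneous polynomials of a given
weighted degree `ν` annihilated by `Y` has complex dimension at most one. -/
theorem kernel_of_positive_weight_field_dim_le_one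
    (w : Fin 2 → ℕ) (hw : ∀ i, 0 < w i) (μ : ℕ) (hμ : 0 < μ)
    (f : Fin 2 → MvPolynomial (Fin 2) ℂ)
    (hf : ∀ i, (f i).IsWeightedHomogeneous w (w i + μ))
    (hfne : f ≠ 0) (ν : ℕ) :
    Module.rank ℂ
      ((weightedHomogeneousSubmodule ℂ w ν) ⊓
        (LinearMap.ker
          ((LinearMap.mulLeft ℂ (f 0)) ∘ₗ (pderiv (0 : Fin 2)).toLinearMap +
            (LinearMap.mulLeft ℂ (f 1)) ∘ₗ (pderiv (1 : Fin 2)).toLinearMap)) :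
        Submodule ℂ (MvPolynomial (Fin 2) ℂ)) ≤ 1 := by
  set S : Submodule ℂ (MvPolynomial (Fin 2) ℂ) :=
    (weightedHomogeneousSubmodule ℂ w ν) ⊓
      (LinearMap.ker
        ((LinearMap.mulLeft ℂ (f 0)) ∘ₗ (pderiv (0 : Fin 2)).toLinearMap +
          (LinearMap.mulLeft ℂ (f 1)) ∘ₗ (pderiv (1 : Fin 2)).toLinearMap)) with hS
  -- membership unpacking
  have hmem : ∀ P ∈ S, P.IsWeightedHomogeneous w ν ∧
      f 0 * pderiv 0 P + f 1 * pderiv 1 P = 0 := by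
    intro P hP
    rw [hS, Submodule.mem_inf] at hP
    refine ⟨(mem_weightedHomogeneousSubmodule ℂ w ν P).mp hP.1, ?_⟩
    have := LinearMap.mem_ker.mp hP.2
    simpa using this
  have : Module.Free ℂ S := Module.Free.of_divisionRing ℂ S
  rw [Submodule.rank_le_one_iff_isPrincipal]
  by_cases hbot : S = ⊥
  · rw [hbot]; exact ⟨⟨0, by simp⟩⟩
  obtain ⟨Q, hQS, hQ0⟩ := Submodule.exists_mem_ne_zero_of_ne_bot hbot
  constructor
  refine ⟨Q, le_antisymm ?_ ?_⟩
  swap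
  · rw [Submodule.span_le, Set.singleton_subset_iff]; exact hQS
  intro P hPS
  rw [Submodule.mem_span_singleton]
  obtain ⟨hPh, hPk⟩ := hmem P hPS
  obtain ⟨hQh, hQk⟩ := hmem Q hQS
  -- case ν = 0
  by_cases hν : ν = 0
  · subst hν
    have hPc := KernelAux.homog_zero_constant hw hPh
    have hQc := KernelAux.homog_zero_constant hw hQh
    obtain ⟨p, hp⟩ : ∃ p, coeff 0 P = p := ⟨_, rfl⟩
    obtain ⟨q, hq⟩ : ∃ q, coeff 0 Q = q := ⟨_, rfl⟩
    rw [hp] at hPc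
    rw [hq] at hQc
    have hq0 : q ≠ 0 := fun h => hQ0 (by rw [hQc, h, map_zero])
    exact ⟨p / q, by rw [hPc, hQc, smul_eq_C_mul, ← map_mul, div_mul_cancel₀ _ hq0]⟩
  -- Euler identities
  have hEP := KernelAux.euler hPh
  have hEQ := KernelAux.euler hQh
  have hν0 : (ν : ℂ) ≠ 0 := Nat.cast_ne_zero.mpr hν
  by_cases hD : C (w 0 : ℂ) * X 0 * f 1 = C (w 1 : ℂ) * X 1 * f 0
  · -- degenerate: f parallel to Euler field; then C ν * Q = 0, contradiction
    exfalso
    have h0 : f 0 * (C (ν:ℂ) * Q) = 0 := by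
      linear_combination (-(f 0)) * hEQ + (C (w 0:ℂ) * X 0) * hQk - (pderiv 1 Q) * hD
    have h1 : f 1 * (C (ν:ℂ) * Q) = 0 := by
      linear_combination (-(f 1)) * hEQ + (C (w 1:ℂ) * X 1) * hQk + (pderiv 0 Q) * hD
    obtain ⟨i, hfi⟩ := Function.ne_iff.mp hfne
    have hCQ : C (ν:ℂ) * Q = 0 := by
      fin_cases i
      · exact (mul_eq_zero.mp h0).resolve_left hfi
      · exact (mul_eq_zero.mp h1).resolve_left hfi
    rcases mul_eq_zero.mp hCQ with h | h
    · exact hν0 (by simpa using h)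
    · exact hQ0 h
  · have key : ∀ R : MvPolynomial (Fin 2) ℂ, R.IsWeightedHomogeneous w ν →
        f 0 * pderiv 0 R + f 1 * pderiv 1 R = 0 →
        ((C (w 0 : ℂ) * X 0 * f 1 - C (w 1 : ℂ) * X 1 * f 0) * pderiv 0 R = C (ν:ℂ) * f 1 * R ∧
         (C (w 0 : ℂ) * X 0 * f 1 - C (w 1 : ℂ) * X 1 * f 0) * pderiv 1 R = -(C (ν:ℂ) * f 0 * R)) := by
      intro R hRh hRk
      have hER := KernelAux.euler hRh
      constructor
      · linear_combination f 1 * hER - C (w 1 : ℂ) * X 1 * hRk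
      · linear_combination C (w 0 : ℂ) * X 0 * hRk - f 0 * hER
    obtain ⟨hp0, hp1⟩ := key P hPh hPk
    obtain ⟨hq0, hq1⟩ := key Q hQh hQk
    have hDne : (C (w 0 : ℂ) * X 0 * f 1 - C (w 1 : ℂ) * X 1 * f 0) ≠ 0 :=
      sub_ne_zero_of_ne hD
    have hrel0 : P * pderiv 0 Q = Q * pderiv 0 P := by
      apply mul_left_cancel₀ hDne
      linear_combination P * hq0 - Q * hp0
    have hrel1 : P * pderiv 1 Q = Q * pderiv 1 P := by
      apply mul_left_cancel₀ hDne
      linear_combination P * hq1 - Q * hp1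
    have hrel : ∀ i, P * pderiv i Q = Q * pderiv i P := by
      intro i
      fin_cases i
      · exact hrel0
      · exact hrel1
    obtain ⟨c, hc⟩ := KernelAux.dependence Q P hQ0 hrel
    exact ⟨c, by rw [hc, smul_eq_C_mul]⟩

end
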